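/- arXiv:math/0506291 — 4 statements merged into one kernel-verified Lean document; each statement's English description precedes it below -/
import Mathlib

section
/- Let B ⊆ A be division rings. The maps 𝓡* sending U to {c ∈ A : u(ca) = c·u(a) for all u ∈ U and all a ∈ A}, and 𝓙* sending C to End(_CA) = {u ∈ End(_BA) : u(cx) = c·u(x) for all c ∈ C, x ∈ A}, are mutually inverse bijections between the set of A-subrings U of End(_BA) that are finite-dimensional as right A-vector spaces, and the set of intermediate division rings B ⊆ C ⊆ A such that A is finite-dimensional as a left C-vector space. -/
variable (A : Type*) [DivisionRing A]

/-- Left multiplication `λ_b : x ↦ b·x` as an additive endomorphism of `A`. -/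
def lmul (b : A) : AddMonoid.End A := AddMonoidHom.mulLeft b

/-- Right multiplication `ρ_a : x ↦ x·a` as an additive endomorphism of `A`. -/
def rmul (a : A) : AddMonoid.End A := AddMonoidHom.mulRight a

/-- For a subring `U` of `AddMonoid.End A` containing every right multiplication
`ρ_a`, the ring homomorphism `Aᵐᵒᵖ →+* U` sending `op a` to `ρ_a`.  Composition with it
endows `U` with its right `A`-vector space structure `u · a = ρ_a ∘ u`. -/
def rmulHom (U : Subring (AddMonoid.End A)) (h : ∀ a : A, rmul A a ∈ U) : Aᵐᵒᵖ →+* U where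
  toFun a := ⟨rmul A a.unop, h a.unop⟩
  map_one' := Subtype.ext (AddMonoidHom.ext fun x => mul_one x)
  map_mul' a b := Subtype.ext (AddMonoidHom.ext fun x => (mul_assoc x b.unop a.unop).symm)
  map_zero' := Subtype.ext (AddMonoidHom.ext fun x => mul_zero x)
  map_add' a b := Subtype.ext (AddMonoidHom.ext fun x => mul_add x a.unop b.unop)

namespace JB

variable {A}

@[simp] lemma lmul_apply (b x : A) : lmul A b x = b * x := rfl
@[simp] lemma rmul_apply (a x : A) : rmul A a x = x * a := rfl
@[simp] lemma end_mul_apply (f g : AddMonoid.End A) (x : A) : (f * g) x = f (g x) := rfl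

/-- The subfield `𝓡*(U)`. -/
def C (U : Subring (AddMonoid.End A)) : Subfield A where
  carrier := {c : A | ∀ u ∈ U, ∀ a : A, u (c * a) = c * u a}
  one_mem' := by intro u hu a; rw [one_mul, one_mul]
  mul_mem' := by intro c d hc hd u hu a; rw [mul_assoc, hc u hu, hd u hu, mul_assoc]
  zero_mem' := by intro u hu a; rw [zero_mul, zero_mul, map_zero]
  add_mem' := by intro c d hc hd u hu a; rw [add_mul, map_add, hc u hu, hd u hu, add_mul]
  neg_mem' := by intro c hc u hu a; rw [neg_mul, map_neg, hc u hu, neg_mul]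
  inv_mem' := by
    intro c hc u hu a
    rcases eq_or_ne c 0 with rfl | h
    · simp
    · have h1 := hc u hu (c⁻¹ * a)
      rw [← mul_assoc, mul_inv_cancel₀ h, one_mul] at h1
      calc u (c⁻¹ * a) = c⁻¹ * (c * u (c⁻¹ * a)) := by
            rw [← mul_assoc, inv_mul_cancel₀ h, one_mul]
        _ = c⁻¹ * u a := by rw [← h1]

lemma mem_C {U : Subring (AddMonoid.End A)} {c : A} :
    c ∈ C U ↔ ∀ u ∈ U, ∀ a : A, u (c * a) = c * u a := Iff.rfl

lemma coe_C (U : Subring (AddMonoid.End A)) :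
    (C U : Set A) = {c : A | ∀ u ∈ U, ∀ a : A, u (c * a) = c * u a} := rfl

lemma C_smul {U : Subring (AddMonoid.End A)} (c : C U) (a : A) : c • a = (c : A) * a := rfl

theorem span_lemma (U : Subring (AddMonoid.End A)) (hU : ∀ a : A, rmul A a ∈ U)
    (s : Finset A) :
    ∀ x : A, (∀ u ∈ U, (∀ y ∈ s, u y = 0) → u x = 0) →
      x ∈ Submodule.span (C U) (s : Set A) := by
  classical
  induction s using Finset.induction with
  | empty =>
    intro x hx
    have h1 : (1 : AddMonoid.End A) x = 0 :=
      hx 1 U.one_mem (fun y hy => absurd hy (Finset.notMem_empty y))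
    have : x = 0 := h1
    simp [this]
  | @insert z s hz ih =>
    intro x hx
    by_cases hex : ∃ u ∈ U, (∀ y ∈ s, u y = 0) ∧ u z ≠ 0
    · obtain ⟨u₁, hu₁U, hu₁s, hu₁z⟩ := hex
      set u₂ : AddMonoid.End A := rmul A (u₁ z)⁻¹ * u₁ with hu₂def
      have hu₂U : u₂ ∈ U := U.mul_mem (hU _) hu₁U
      have hu₂s : ∀ y ∈ s, u₂ y = 0 := by
        intro y hy
        show u₁ y * (u₁ z)⁻¹ = 0
        rw [hu₁s y hy, zero_mul]
      have hu₂z : u₂ z = 1 := by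
        show u₁ z * (u₁ z)⁻¹ = 1
        exact mul_inv_cancel₀ hu₁z
      set c : A := u₂ x with hcdef
      -- key: two elements of U killing s and agreeing at z agree at x
      have key : ∀ w w' : AddMonoid.End A, w ∈ U → w' ∈ U →
          (∀ y ∈ s, w y = 0) → (∀ y ∈ s, w' y = 0) → w z = w' z → w x = w' x := by
        intro w w' hw hw' hws hw's hzz
        have h0 : (w - w') x = 0 := by
          apply hx (w - w') (U.sub_mem hw hw')
          intro y hy
          rcases Finset.mem_insert.mp hy with rfl | hy
          · show w y - w' y = 0
            rw [hzz, sub_self]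
          · show w y - w' y = 0
            rw [hws y hy, hw's y hy, sub_self]
        have := sub_eq_zero.mp h0
        exact this
      have hcC : c ∈ C U := by
        intro u hu a
        have h := key (u * (rmul A a * u₂)) (rmul A (u a) * u₂)
          (U.mul_mem hu (U.mul_mem (hU _) hu₂U)) (U.mul_mem (hU _) hu₂U)
          (fun y hy => by simp [hu₂s y hy]) (fun y hy => by simp [hu₂s y hy])
          (by simp [hu₂z])
        simpa using h
      have hsub : ∀ w ∈ U, (∀ y ∈ s, w y = 0) → w (x - c * z) = 0 := by
        intro w hw hws
        have h1 : w x = c * w z := by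
          have h := key w (rmul A (w z) * u₂) hw (U.mul_mem (hU _) hu₂U) hws
            (fun y hy => by simp [hu₂s y hy]) (by simp [hu₂z])
          simpa using h
        have h2 : w (c * z) = c * w z := hcC w hw z
        rw [map_sub, h1, h2, sub_self]
      have hmem := ih (x - c * z) hsub
      have hcz : c * z ∈ Submodule.span (C U) ((insert z s : Finset A) : Set A) := by
        have : (⟨c, hcC⟩ : C U) • z = c * z := rfl
        rw [← this]
        exact Submodule.smul_mem _ _ (Submodule.subset_span
          (Finset.mem_coe.mpr (Finset.mem_insert_self z s)))
      have hmem' : x - c * z ∈ Submodule.span (C U) ((insert z s : Finset A) : Set A) :=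
        Submodule.span_mono (Finset.coe_subset.mpr (Finset.subset_insert z s)) hmem
      have := Submodule.add_mem _ hmem' hcz
      simpa using this
    · push_neg at hex
      have hmem := ih x (fun u hu hus => hx u hu (fun y hy => by
        rcases Finset.mem_insert.mp hy with rfl | hy
        · exact hex u hu hus
        · exact hus y hy))
      exact Submodule.span_mono (Finset.coe_subset.mpr (Finset.subset_insert z s)) hmem

theorem density (U : Subring (AddMonoid.End A)) (hU : ∀ a : A, rmul A a ∈ U)
    {n : ℕ} (x : Fin n → A) (hx : LinearIndependent (C U) x) (y : Fin n → A) :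
    ∃ u ∈ U, ∀ i, u (x i) = y i := by
  classical
  have key : ∀ j, ∃ u ∈ U, (∀ i, i ≠ j → u (x i) = 0) ∧ u (x j) ≠ 0 := by
    intro j
    by_contra hcon
    push_neg at hcon
    have hmem : x j ∈ Submodule.span (C U) (((Finset.univ.erase j).image x : Finset A) : Set A) := by
      apply span_lemma U hU _ (x j)
      intro u hu hus
      exact hcon u hu (fun i hij =>
        hus (x i) (Finset.mem_image_of_mem x (Finset.mem_erase.mpr ⟨hij, Finset.mem_univ i⟩)))
    have hns : x j ∉ Submodule.span (C U) (x '' (Finset.univ.erase j : Finset (Fin n))) :=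
      hx.notMem_span_image (by simp)
    rw [Finset.coe_image] at hmem
    exact hns hmem
  choose u hu hu0 huj using key
  refine ⟨∑ j, rmul A ((u j (x j))⁻¹ * y j) * u j,
    Subring.sum_mem _ (fun j _ => U.mul_mem (hU _) (hu j)), ?_⟩
  intro i
  have : (∑ j, rmul A ((u j (x j))⁻¹ * y j) * u j) (x i)
      = ∑ j, (rmul A ((u j (x j))⁻¹ * y j) * u j) (x i) :=
    AddMonoidHom.finset_sum_apply _ _ _
  rw [this, Finset.sum_eq_single i]
  · simp [← mul_assoc, mul_inv_cancel₀ (huj i)]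
  · intro j _ hji
    simp [hu0 j i (fun h => hji (h ▸ rfl))]
  · intro h; exact absurd (Finset.mem_univ i) h




lemma rmul_mem_centralizer (s : Set A) (a : A) :
    rmul A a ∈ Subring.centralizer (lmul A '' s) := by
  rw [Subring.mem_centralizer_iff]
  rintro g ⟨c, _, rfl⟩
  refine AddMonoidHom.ext fun x => ?_
  show c * (x * a) = (c * x) * a
  rw [mul_assoc]

lemma U_le_centralizer (U : Subring (AddMonoid.End A)) :
    U ≤ Subring.centralizer (lmul A '' ((C U : Set A))) := by
  intro u hu
  rw [Subring.mem_centralizer_iff]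
  rintro g ⟨c, hc, rfl⟩
  refine AddMonoidHom.ext fun a => ?_
  show c * u a = u (c * a)
  exact (hc u hu a).symm

/-- An element of the centralizer of `lmul '' C'` as a `C'`-linear map. -/
def toLin (C' : Subfield A) (u : AddMonoid.End A)
    (hu : u ∈ Subring.centralizer (lmul A '' (C' : Set A))) : A →ₗ[C'] A where
  toFun := u
  map_add' := u.map_add
  map_smul' := fun c a => by
    have h := Subring.mem_centralizer_iff.mp hu (lmul A (c : A)) ⟨(c : A), c.2, rfl⟩
    have h2 : (c : A) * u a = u ((c : A) * a) := DFunLike.congr_fun h a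
    exact h2.symm

theorem finite_C (U : Subring (AddMonoid.End A)) (hU : ∀ a : A, rmul A a ∈ U)
    (hfin : letI := Module.compHom U (rmulHom A U hU); Module.Finite Aᵐᵒᵖ U) :
    Module.Finite (C U) A := by
  letI := Module.compHom U (rmulHom A U hU)
  haveI : Module.Finite Aᵐᵒᵖ U := hfin
  have bound : ∀ (m : ℕ) (x : Fin m → A), LinearIndependent (C U) x →
      (m : Cardinal) ≤ Module.rank Aᵐᵒᵖ U := by
    intro m x hx
    let f : U →ₗ[Aᵐᵒᵖ] (Fin m → Aᵐᵒᵖ) :=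
      { toFun := fun u i => MulOpposite.op (u.1 (x i))
        map_add' := fun u v => by
          funext i
          show MulOpposite.op ((u.1 + v.1) (x i)) = _
          rw [show (u.1 + v.1) (x i) = u.1 (x i) + v.1 (x i) from rfl, MulOpposite.op_add]
          rfl
        map_smul' := fun a u => by
          funext i
          show MulOpposite.op ((rmul A a.unop * u.1) (x i)) = _
          show MulOpposite.op (u.1 (x i) * a.unop) = a * MulOpposite.op (u.1 (x i))
          rw [MulOpposite.op_mul, MulOpposite.op_unop] }
    have hsurj : Function.Surjective f := by
      intro y
      obtain ⟨u, hu, hy⟩ := density U hU x hx (fun i => (y i).unop)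
      refine ⟨⟨u, hu⟩, funext fun i => ?_⟩
      show MulOpposite.op (u (x i)) = y i
      rw [hy i, MulOpposite.op_unop]
    have h := LinearMap.rank_le_of_surjective f hsurj
    rwa [rank_fin_fun] at h
  obtain ⟨n, hn⟩ := Cardinal.lt_aleph0.mp (Module.rank_lt_aleph0 Aᵐᵒᵖ U)
  let b := Module.Basis.ofVectorSpace (C U) A
  have hfinidx : (Module.Basis.ofVectorSpaceIndex (C U) A).Finite := by
    by_contra hinf
    have hinf' : (Module.Basis.ofVectorSpaceIndex (C U) A).Infinite := hinf
    let e := hinf'.natEmbedding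
    let x : Fin (n + 1) → A := fun i => b (e i.val)
    have hx : LinearIndependent (C U) x := by
      apply b.linearIndependent.comp
      intro i j hij
      exact Fin.val_injective (e.injective hij)
    have h := bound (n + 1) x hx
    rw [hn] at h
    exact absurd (Nat.cast_le.mp h) (by omega)
  haveI : Finite (Module.Basis.ofVectorSpaceIndex (C U) A) := hfinidx.to_subtype
  exact Module.Finite.of_basis b

theorem finite_end (C' : Subfield A) (hC : Module.Finite C' A)
    (h : ∀ a : A, rmul A a ∈ Subring.centralizer (lmul A '' (C' : Set A))) :
    letI := Module.compHom (↥(Subring.centralizer (lmul A '' (C' : Set A)))) (rmulHom A (Subring.centralizer (lmul A '' (C' : Set A))) h)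
    Module.Finite Aᵐᵒᵖ (Subring.centralizer (lmul A '' (C' : Set A))) := by
  letI := Module.compHom (↥(Subring.centralizer (lmul A '' (C' : Set A)))) (rmulHom A (Subring.centralizer (lmul A '' (C' : Set A))) h)
  obtain ⟨t, ht⟩ : ∃ t : Finset A, Submodule.span C' (t : Set A) = ⊤ :=
    Module.Finite.fg_top (R := C') (M := A)
  let f : (Subring.centralizer (lmul A '' (C' : Set A))) →ₗ[Aᵐᵒᵖ] ({ y : A // y ∈ t } → Aᵐᵒᵖ) :=
    { toFun := fun u y => MulOpposite.op (u.1 y.1)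
      map_add' := fun u v => by
        funext y
        show MulOpposite.op ((u.1 + v.1) y.1) = _
        rw [show (u.1 + v.1) y.1 = u.1 y.1 + v.1 y.1 from rfl, MulOpposite.op_add]
        rfl
      map_smul' := fun a u => by
        funext y
        show MulOpposite.op (u.1 y.1 * a.unop) = a * MulOpposite.op (u.1 y.1)
        rw [MulOpposite.op_mul, MulOpposite.op_unop] }
  have hinj : Function.Injective f := by
    rw [injective_iff_map_eq_zero]
    intro u hu0
    have hlin : toLin C' u.1 u.2 = (0 : A →ₗ[C'] A) := by
      apply LinearMap.ext_on ht
      intro y hy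
      have := congrFun hu0 ⟨y, hy⟩
      have h1 : MulOpposite.op (u.1 y) = 0 := this
      exact (MulOpposite.op_injective (by simpa using h1) : u.1 y = 0)
    refine Subtype.ext (AddMonoidHom.ext fun x => ?_)
    exact DFunLike.congr_fun hlin x
  exact FiniteDimensional.of_injective f hinj


theorem centralizer_C_eq (U : Subring (AddMonoid.End A)) (hU : ∀ a : A, rmul A a ∈ U)
    (hfin : letI := Module.compHom U (rmulHom A U hU); Module.Finite Aᵐᵒᵖ U) :
    Subring.centralizer (lmul A '' ((C U : Set A))) = U := by
  apply le_antisymm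
  · intro v hv
    haveI : Module.Finite (C U) A := finite_C U hU hfin
    let b := Module.finBasis (C U) A
    obtain ⟨u, hu, hval⟩ := density U hU b b.linearIndependent (fun i => v (b i))
    have hlin : toLin (C U) v hv = toLin (C U) u (U_le_centralizer U hu) := by
      apply b.ext
      intro i
      exact (hval i).symm
    have : v = u := AddMonoidHom.ext fun x => DFunLike.congr_fun hlin x
    rw [this]
    exact hu
  · exact U_le_centralizer U

set_option maxHeartbeats 1000000 in
theorem C_centralizer_eq (C' : Subfield A) :
    {c : A | ∀ u ∈ Subring.centralizer (lmul A '' (C' : Set A)),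
      ∀ a : A, u (c * a) = c * u a} = (C' : Set A) := by
  ext c
  constructor
  · intro hc
    by_contra hcC
    have h1 : c ∉ Submodule.span C' ({1} : Set A) := by
      rw [Submodule.mem_span_singleton]
      rintro ⟨γ, hγ⟩
      apply hcC
      have : (γ : A) * 1 = c := hγ
      rw [mul_one] at this
      exact this ▸ γ.2
    set q : A →ₗ[C'] (A ⧸ Submodule.span C' ({1} : Set A)) :=
      Submodule.mkQ (Submodule.span C' ({1} : Set A)) with hq
    have hqc : q c ≠ 0 := by
      rw [hq, Submodule.mkQ_apply, ne_eq, Submodule.Quotient.mk_eq_zero]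
      exact h1
    let bQ := Module.Basis.ofVectorSpace C' (A ⧸ Submodule.span C' ({1} : Set A))
    have hex : ∃ i, bQ.repr (q c) i ≠ 0 := by
      by_contra hall
      push_neg at hall
      apply hqc
      have : bQ.repr (q c) = 0 := Finsupp.ext hall
      have h2 := congrArg bQ.repr.symm this
      rw [bQ.repr.symm_apply_apply, map_zero] at h2
      exact h2
    obtain ⟨i, hi⟩ := hex
    set γ : C' := bQ.repr (q c) i with hγ
    let u0 : A →ₗ[C'] A :=
      { toFun := fun a => ((bQ.coord i (q a) * γ⁻¹ : C') : A)
        map_add' := fun a b => by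
          show ((bQ.coord i (q (a + b)) * γ⁻¹ : C') : A)
            = ((bQ.coord i (q a) * γ⁻¹ : C') : A) + ((bQ.coord i (q b) * γ⁻¹ : C') : A)
          rw [map_add, map_add, add_mul]
          push_cast
          rfl
        map_smul' := fun δ a => by
          show ((bQ.coord i (q (δ • a)) * γ⁻¹ : C') : A)
            = δ • ((bQ.coord i (q a) * γ⁻¹ : C') : A)
          rw [map_smul, map_smul]
          show (((δ * bQ.coord i (q a)) * γ⁻¹ : C') : A)
            = (δ : A) * ((bQ.coord i (q a) * γ⁻¹ : C') : A)
          rw [mul_assoc]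
          push_cast
          rfl }
    let u1 : AddMonoid.End A := u0.toAddMonoidHom
    have hcoe : ∀ x : A, u1 x = u0 x := fun _ => rfl
    have hu0mem : u1 ∈ Subring.centralizer (lmul A '' (C' : Set A)) := by
      rw [Subring.mem_centralizer_iff]
      rintro g ⟨δ, hδ, rfl⟩
      refine AddMonoidHom.ext fun a => ?_
      show δ * u1 a = u1 (δ * a)
      rw [hcoe, hcoe]
      have := u0.map_smul (⟨δ, hδ⟩ : C') a
      exact this.symm
    have hkey : u1 (c * 1) = c * u1 1 := hc u1 hu0mem 1
    rw [mul_one, hcoe, hcoe] at hkey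
    have hu01 : u0 1 = 0 := by
      have hq1 : q (1 : A) = 0 := by
        rw [hq, Submodule.mkQ_apply, Submodule.Quotient.mk_eq_zero]
        exact Submodule.subset_span rfl
      show ((bQ.coord i (q 1) * γ⁻¹ : C') : A) = 0
      rw [hq1, map_zero, zero_mul]
      rfl
    have hu0c : u0 c = 1 := by
      show ((bQ.coord i (q c) * γ⁻¹ : C') : A) = 1
      have : bQ.coord i (q c) = γ := by rw [hγ]; rfl
      rw [this, mul_inv_cancel₀ (by rwa [hγ] at hi ⊢)]
      rfl
    rw [hu0c, hu01, mul_zero] at hkey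
    exact one_ne_zero hkey
  · intro hc u hu a
    have h := Subring.mem_centralizer_iff.mp hu (lmul A c) ⟨c, hc, rfl⟩
    have h2 : c * u a = u (c * a) := DFunLike.congr_fun h a
    exact h2.symm

end JB

/-- **Jacobson–Bourbaki theorem for division rings.**
Let `B ⊆ A` be division rings.  The maps `𝓡*` sending `U` to
`{c ∈ A : u (c·a) = c·u(a) for all u ∈ U, a ∈ A}` and `𝓙*` sending `C` to
`End(_C A)` (the centralizer in `AddMonoid.End A` of the left multiplications by
elements of `C`) are mutually inverse bijections between the set of `A`-subrings `U` of
`End(_B A)` which are finite dimensional as right `A`-vector spaces and the set of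
intermediate division rings `B ⊆ C ⊆ A` with `A` finite dimensional as a left
`C`-vector space. -/
theorem stmt_3 {A : Type*} [DivisionRing A] (B : Subfield A)
    (Dset : Set (Subring (AddMonoid.End A)))
    (hD : Dset = {U | U ≤ Subring.centralizer (lmul A '' (B : Set A)) ∧
      (∀ a : A, rmul A a ∈ U) ∧
      ∀ h : ∀ a : A, rmul A a ∈ U,
        (letI := Module.compHom U (rmulHom A U h); Module.Finite Aᵐᵒᵖ U)})
    (Iset : Set (Subfield A))
    (hI : Iset = {C | B ≤ C ∧ Module.Finite C A}) :
    (∀ C ∈ Iset, Subring.centralizer (lmul A '' (C : Set A)) ∈ Dset) ∧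
    (∀ U ∈ Dset, ∃ C ∈ Iset,
      (C : Set A) = {c : A | ∀ u ∈ U, ∀ a : A, u (c * a) = c * u a}) ∧
    (∀ C ∈ Iset,
      {c : A | ∀ u ∈ Subring.centralizer (lmul A '' (C : Set A)),
        ∀ a : A, u (c * a) = c * u a} = (C : Set A)) ∧
    (∀ U ∈ Dset, Subring.centralizer
        (lmul A '' {c : A | ∀ u ∈ U, ∀ a : A, u (c * a) = c * u a}) = U) := by
  subst hD hI
  refine ⟨?_, ?_, ?_, ?_⟩
  · rintro C' ⟨hBC, hfinC⟩
    refine ⟨Subring.centralizer_le _ _ (Set.image_mono (fun x hx => hBC hx)),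
      fun a => JB.rmul_mem_centralizer _ a, fun h => JB.finite_end C' hfinC h⟩
  · rintro U ⟨hUB, hUr, hUfin⟩
    refine ⟨JB.C U, ⟨?_, JB.finite_C U hUr (hUfin hUr)⟩, (JB.coe_C U)⟩
    intro b hb
    refine JB.mem_C.mpr (fun u hu a => ?_)
    have h := Subring.mem_centralizer_iff.mp (hUB hu) (lmul A b) ⟨b, hb, rfl⟩
    have h2 : b * u a = u (b * a) := DFunLike.congr_fun h a
    exact h2.symm
  · rintro C' ⟨hBC, hfinC⟩
    exact JB.C_centralizer_eq C'
  · rintro U ⟨hUB, hUr, hUfin⟩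
    have hset : {c : A | ∀ u ∈ U, ∀ a : A, u (c * a) = c * u a} = ((JB.C U : Set A)) := rfl
    rw [hset]
    exact JB.centralizer_C_eq U hUr (hUfin hUr)
end

section
/- Let B ⊆ A be division rings, and let C and C' be intermediate division rings B ⊆ C ⊆ A and B ⊆ C' ⊆ A such that A is finite-dimensional as a left vector space over each of C and C'. Then there exists a nonzero element g ∈ A with C' = gCg⁻¹ if and only if there exists a ring isomorphism φ: End(_CA) → End(_{C'}A) satisfying φ(ρ_a) = ρ_a for every a ∈ A (i.e., End(_CA) and End(_{C'}A) are isomorphic as A-rings). -/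
variable (A : Type*) [DivisionRing A]

section Aux

variable {A}

lemma aux_lmul_apply (b x : A) : lmul A b x = b * x := rfl
lemma aux_rmul_apply (a x : A) : rmul A a x = x * a := rfl
lemma aux_add_apply (f g : AddMonoid.End A) (x : A) : (f + g) x = f x + g x := rfl
lemma aux_mul_apply (f g : AddMonoid.End A) (x : A) : (f * g) x = f (g x) := rfl

/-- Membership in the centralizer of the left multiplications by `D` is exactly
left `D`-linearity. -/
lemma aux_mem_centralizer_iff (D : Subfield A) (u : AddMonoid.End A) :
    u ∈ Subring.centralizer (lmul A '' (D : Set A)) ↔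
      ∀ c ∈ D, ∀ x : A, u (c * x) = c * u x := by
  rw [Subring.mem_centralizer_iff]
  constructor
  · intro h c hc x
    exact (DFunLike.congr_fun (h (lmul A c) ⟨c, hc, rfl⟩) x).symm
  · rintro h v ⟨c, hc, rfl⟩
    refine DFunLike.ext _ _ fun x => ?_
    exact (h c hc x).symm

lemma aux_rmul_mem (D : Subfield A) (a : A) :
    rmul A a ∈ Subring.centralizer (lmul A '' (D : Set A)) := by
  rw [aux_mem_centralizer_iff]
  intro c hc x
  show c * x * a = c * (x * a)
  exact mul_assoc c x a

/-- "Double centralizer" lemma: if `lmul d` commutes with every `D`-linear additive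
endomorphism of `A`, then `d ∈ D`. -/
lemma aux_mem_of_comm (D : Subfield A) (d : A)
    (h : ∀ u ∈ Subring.centralizer (lmul A '' (D : Set A)),
      ∀ x : A, u (d * x) = d * u x) : d ∈ D := by
  by_contra hd
  set S : Submodule D A := Submodule.span D {(1 : A)} with hSdef
  have hdS : d ∉ S := by
    intro hmem
    rw [hSdef, Submodule.mem_span_singleton] at hmem
    obtain ⟨c, hc⟩ := hmem
    have hcd : (c : A) = d := by
      have : (c : A) * 1 = d := hc
      simpa using this
    exact hd (hcd ▸ c.2)
  set w : A ⧸ S := Submodule.Quotient.mk d with hwdef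
  have hw : w ≠ 0 := by
    simpa [hwdef, Submodule.Quotient.mk_eq_zero] using hdS
  obtain ⟨T, hT⟩ := Submodule.exists_isCompl (Submodule.span D {w})
  let e := LinearEquiv.toSpanNonzeroSingleton D (A ⧸ S) w hw
  let F : (A ⧸ S) →ₗ[D] A :=
    (LinearMap.toSpanSingleton D A 1) ∘ₗ (e.symm : (Submodule.span D {w}) →ₗ[D] D) ∘ₗ
      ((Submodule.span D {w}).linearProjOfIsCompl T hT)
  let f : A →ₗ[D] A := F ∘ₗ S.mkQ
  have hf1 : f 1 = 0 := by
    have h1S : (1 : A) ∈ S := Submodule.mem_span_singleton_self 1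
    have : S.mkQ 1 = 0 := (Submodule.Quotient.mk_eq_zero S).mpr h1S
    simp [f, this]
  have hfd : f d = 1 := by
    have hwmem : w ∈ Submodule.span D {w} := Submodule.mem_span_singleton_self w
    have hproj : (Submodule.span D {w}).linearProjOfIsCompl T hT w = ⟨w, hwmem⟩ :=
      Submodule.linearProjOfIsCompl_apply_left hT ⟨w, hwmem⟩
    have hesymm : e.symm ⟨w, hwmem⟩ = 1 := by
      apply e.injective
      rw [e.apply_symm_apply]
      apply Subtype.ext
      show w = (1 : D) • w
      rw [one_smul]
    have hmkq : S.mkQ d = w := rfl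
    simp [f, F, hmkq, hproj, hesymm, LinearMap.toSpanSingleton_apply]
  have hfmem : f.toAddMonoidHom ∈ Subring.centralizer (lmul A '' (D : Set A)) := by
    refine (aux_mem_centralizer_iff D _).mpr ?_
    intro c hc x
    exact f.map_smul ⟨c, hc⟩ x
  have := h f.toAddMonoidHom hfmem 1
  rw [mul_one] at this
  change f d = d * f 1 at this
  rw [hfd, hf1, mul_zero] at this
  exact one_ne_zero this

lemma aux_linearMap_mem (D : Subfield A) (f : A →ₗ[D] A) :
    f.toAddMonoidHom ∈ Subring.centralizer (lmul A '' (D : Set A)) := by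
  refine (aux_mem_centralizer_iff D _).mpr ?_
  intro c hc x
  show f (c * x) = c * f x
  have h := f.map_smul ⟨c, hc⟩ x
  rwa [show (⟨c, hc⟩ : D) • x = c * x from rfl,
    show (⟨c, hc⟩ : D) • f x = c * f x from rfl] at h

end Aux

set_option maxHeartbeats 2000000 in
set_option synthInstance.maxHeartbeats 1000000 in
/-- Let `B ⊆ A` be division rings and let `C, C'` be intermediate division rings
`B ⊆ C, C' ⊆ A` such that `A` is finite dimensional as a left vector space over each of
them.  Then `C' = g·C·g⁻¹` for some nonzero `g ∈ A` if and only if there is a ring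
isomorphism `End(_C A) ≃ End(_{C'} A)` (between the centralizers in `AddMonoid.End A` of
the corresponding sets of left multiplications) fixing every right multiplication `ρ_a`,
i.e. iff `End(_C A)` and `End(_{C'} A)` are isomorphic as `A`-rings. -/
theorem stmt_4 {A : Type*} [DivisionRing A] (B C C' : Subfield A)
    (hBC : B ≤ C) (hBC' : B ≤ C')
    (hC : Module.Finite C A) (hC' : Module.Finite C' A) :
    (∃ g : A, g ≠ 0 ∧ (C' : Set A) = (fun c => g * c * g⁻¹) '' (C : Set A)) ↔
    (∃ φ : Subring.centralizer (lmul A '' (C : Set A)) ≃+*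
        Subring.centralizer (lmul A '' (C' : Set A)),
      ∀ (a : A) (u : Subring.centralizer (lmul A '' (C : Set A))),
        (u : AddMonoid.End A) = rmul A a → (φ u : AddMonoid.End A) = rmul A a) := by
  constructor
  · -- forward: conjugation by `lmul g`
    rintro ⟨g, hg, hgC⟩
    have hC'rep : ∀ d ∈ C', ∃ c ∈ C, g * c * g⁻¹ = d := by
      intro d hd
      have : d ∈ (fun c => g * c * g⁻¹) '' (C : Set A) := hgC ▸ hd
      obtain ⟨c, hc, hcd⟩ := this
      exact ⟨c, hc, hcd⟩
    have hC'mem : ∀ c ∈ C, g * c * g⁻¹ ∈ C' := by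
      intro c hc
      have : g * c * g⁻¹ ∈ (fun c => g * c * g⁻¹) '' (C : Set A) := ⟨c, hc, rfl⟩
      rw [← hgC] at this
      exact this
    have hto : ∀ u ∈ Subring.centralizer (lmul A '' (C : Set A)),
        lmul A g * u * lmul A g⁻¹ ∈ Subring.centralizer (lmul A '' (C' : Set A)) := by
      intro u hu
      rw [aux_mem_centralizer_iff] at hu ⊢
      intro d hd x
      obtain ⟨c, hc, rfl⟩ := hC'rep d hd
      simp only [aux_mul_apply, aux_lmul_apply]
      rw [show g⁻¹ * (g * c * g⁻¹ * x) = c * (g⁻¹ * x) by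
        simp [mul_assoc, inv_mul_cancel_left₀ hg]]
      rw [hu c hc]
      simp [mul_assoc, inv_mul_cancel_left₀ hg]
    have hfrom : ∀ v ∈ Subring.centralizer (lmul A '' (C' : Set A)),
        lmul A g⁻¹ * v * lmul A g ∈ Subring.centralizer (lmul A '' (C : Set A)) := by
      intro v hv
      rw [aux_mem_centralizer_iff] at hv ⊢
      intro c hc x
      simp only [aux_mul_apply, aux_lmul_apply]
      rw [show g * (c * x) = (g * c * g⁻¹) * (g * x) by
        simp [mul_assoc, inv_mul_cancel_left₀ hg]]
      rw [hv _ (hC'mem c hc)]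
      simp [mul_assoc, inv_mul_cancel_left₀ hg]
    refine ⟨{
        toFun := fun u => ⟨lmul A g * ↑u * lmul A g⁻¹, hto u u.2⟩
        invFun := fun v => ⟨lmul A g⁻¹ * ↑v * lmul A g, hfrom v v.2⟩
        left_inv := ?_
        right_inv := ?_
        map_mul' := ?_
        map_add' := ?_ }, ?_⟩
    · intro u
      apply Subtype.ext
      refine DFunLike.ext _ _ fun x => ?_
      simp [aux_mul_apply, aux_lmul_apply, inv_mul_cancel_left₀ hg, mul_inv_cancel_left₀ hg]
    · intro v
      apply Subtype.ext
      refine DFunLike.ext _ _ fun x => ?_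
      simp [aux_mul_apply, aux_lmul_apply, inv_mul_cancel_left₀ hg, mul_inv_cancel_left₀ hg]
    · intro u v
      apply Subtype.ext
      refine DFunLike.ext _ _ fun x => ?_
      simp [aux_mul_apply, aux_lmul_apply, inv_mul_cancel_left₀ hg, mul_inv_cancel_left₀ hg]
    · intro u v
      apply Subtype.ext
      refine DFunLike.ext _ _ fun x => ?_
      simp [aux_mul_apply, aux_lmul_apply, aux_add_apply, mul_add]
    · intro a u hu
      show lmul A g * ↑u * lmul A g⁻¹ = rmul A a
      rw [hu]
      refine DFunLike.ext _ _ fun x => ?_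
      simp only [aux_mul_apply, aux_lmul_apply, aux_rmul_apply]
      simp [mul_assoc, mul_inv_cancel_left₀ hg]
  · -- backward direction
    rintro ⟨φ, hφ⟩
    -- the projection p onto span C {1}
    obtain ⟨T, hT⟩ := Submodule.exists_isCompl (Submodule.span C {(1 : A)})
    set S : Submodule C A := Submodule.span C {(1 : A)} with hSdef
    let p : A →ₗ[C] A := S.subtype ∘ₗ S.projectionOnto T hT
    have h1S : (1 : A) ∈ S := Submodule.mem_span_singleton_self 1
    have hp1 : p 1 = 1 := by
      have h := Submodule.linearProjOfIsCompl_apply_left hT ⟨1, h1S⟩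
      show S.subtype (S.projectionOnto T hT 1) = 1
      rw [show ((⟨1, h1S⟩ : S) : A) = 1 from rfl] at h
      rw [h]
      rfl
    have hpmem : ∀ x : A, ∃ γ : C, p x = (γ : A) := by
      intro x
      obtain ⟨γ, hγ⟩ := Submodule.mem_span_singleton.mp (S.projectionOnto T hT x).2
      refine ⟨γ, ?_⟩
      have h2 : (γ : A) * 1 = p x := hγ
      rw [mul_one] at h2
      exact h2.symm
    -- elements of E
    let pE : Subring.centralizer (lmul A '' (C : Set A)) :=
      ⟨p.toAddMonoidHom, aux_linearMap_mem C p⟩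
    let rE : A → Subring.centralizer (lmul A '' (C : Set A)) :=
      fun a => ⟨rmul A a, aux_rmul_mem C a⟩
    have hkey : ∀ (u : Subring.centralizer (lmul A '' (C : Set A))) (a : A),
        rE ((u : AddMonoid.End A) a) * pE = u * rE a * pE := by
      intro u a
      apply Subtype.ext
      refine DFunLike.ext _ _ fun x => ?_
      obtain ⟨γ, hγ⟩ := hpmem x
      have hu := (aux_mem_centralizer_iff C u).mp u.2 γ γ.2
      show p x * (u : AddMonoid.End A) a = (u : AddMonoid.End A) (p x * a)
      rw [hγ, hu]
    -- a point where φ pE is nonzero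
    have hpE0 : pE ≠ 0 := by
      intro h
      have : p 1 = 0 := by
        have := congrArg (fun u : Subring.centralizer (lmul A '' (C : Set A)) =>
          (u : AddMonoid.End A) 1) h
        exact (by simpa using this : (pE : AddMonoid.End A) 1 = 0)
      rw [hp1] at this
      exact one_ne_zero this
    have hφpE : φ pE ≠ 0 := fun h => hpE0 (φ.injective (by rw [h, map_zero]))
    obtain ⟨x₀, hx₀⟩ : ∃ x₀ : A, (↑(φ pE) : AddMonoid.End A) x₀ ≠ 0 := by
      by_contra h
      push_neg at h
      exact hφpE (Subtype.ext (AddMonoidHom.ext h))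
    -- the intertwiner
    set ψ : A → A := fun a => (↑(φ (rE a * pE)) : AddMonoid.End A) x₀ with hψdef
    have hψ : ∀ (u : Subring.centralizer (lmul A '' (C : Set A))) (a : A),
        ψ ((u : AddMonoid.End A) a) = (↑(φ u) : AddMonoid.End A) (ψ a) := by
      intro u a
      show (↑(φ (rE ((u : AddMonoid.End A) a) * pE)) : AddMonoid.End A) x₀ = _
      rw [hkey u a, mul_assoc, map_mul]
      rfl
    have hrE1 : rE 1 = 1 := by
      apply Subtype.ext
      refine DFunLike.ext _ _ fun x => ?_
      exact mul_one x
    set g : A := ψ 1 with hgdef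
    have hg0 : g ≠ 0 := by
      show ψ 1 ≠ 0
      rw [hψdef]
      simpa [hrE1] using hx₀
    have hψ_lin : ∀ x a : A, ψ (x * a) = ψ x * a := by
      intro x a
      have h1 := hψ (rE a) x
      have h2 : (↑(φ (rE a)) : AddMonoid.End A) = rmul A a := hφ a (rE a) rfl
      rw [show (↑(rE a) : AddMonoid.End A) x = x * a from rfl] at h1
      rw [h1, h2]
      rfl
    have hψ_eq : ∀ x : A, ψ x = g * x := by
      intro x
      have := hψ_lin 1 x
      rwa [one_mul] at this
    have hconj : ∀ (u : Subring.centralizer (lmul A '' (C : Set A))) (y : A),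
        (↑(φ u) : AddMonoid.End A) y = g * (u : AddMonoid.End A) (g⁻¹ * y) := by
      intro u y
      have h1 := hψ u (g⁻¹ * y)
      rw [hψ_eq, hψ_eq, mul_inv_cancel_left₀ hg0] at h1
      exact h1.symm
    refine ⟨g, hg0, ?_⟩
    apply Set.eq_of_subset_of_subset
    · -- C' ⊆ g C g⁻¹
      intro d hd
      have hc : g⁻¹ * d * g ∈ C := by
        apply aux_mem_of_comm C
        intro u hu x
        have hv := (aux_mem_centralizer_iff C' ↑(φ ⟨u, hu⟩)).mp (φ ⟨u, hu⟩).2 d hd (g * x)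
        rw [hconj ⟨u, hu⟩, hconj ⟨u, hu⟩, inv_mul_cancel_left₀ hg0] at hv
        -- hv : g * u (g⁻¹ * (d * (g * x))) = d * (g * u x)
        have := congrArg (fun z => g⁻¹ * z) hv
        simp only [inv_mul_cancel_left₀ hg0] at this
        -- this : u (g⁻¹ * (d * (g * x))) = g⁻¹ * (d * (g * u x))
        calc (u : AddMonoid.End A) (g⁻¹ * d * g * x)
            = (u : AddMonoid.End A) (g⁻¹ * (d * (g * x))) := by rw [mul_assoc, mul_assoc]
          _ = g⁻¹ * (d * (g * (u : AddMonoid.End A) x)) := this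
          _ = g⁻¹ * d * g * (u : AddMonoid.End A) x := by rw [mul_assoc, mul_assoc]
      refine ⟨g⁻¹ * d * g, hc, ?_⟩
      simp [mul_assoc, mul_inv_cancel₀ hg0, inv_mul_cancel_left₀ hg0, mul_inv_cancel_left₀ hg0]
    · -- g C g⁻¹ ⊆ C'
      rintro _ ⟨c, hc, rfl⟩
      show g * c * g⁻¹ ∈ C'
      apply aux_mem_of_comm C'
      intro v hv x
      set u := φ.symm ⟨v, hv⟩ with hudef
      have huv : φ u = ⟨v, hv⟩ := φ.apply_symm_apply ⟨v, hv⟩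
      have hvc : v = (↑(φ u) : AddMonoid.End A) := by rw [huv]
      have hu := (aux_mem_centralizer_iff C ↑u).mp u.2 c hc
      rw [hvc, hconj u, hconj u]
      -- goal : g * u (g⁻¹ * (g * c * g⁻¹ * x)) = g * c * g⁻¹ * (g * u (g⁻¹ * x))
      rw [show g⁻¹ * (g * c * g⁻¹ * x) = c * (g⁻¹ * x) by
        simp [mul_assoc, inv_mul_cancel_left₀ hg0]]
      rw [hu]
      simp [mul_assoc, inv_mul_cancel_left₀ hg0]
end

section
/- For every natural number n, any two unital ℝ-algebra homomorphisms f, g : ℍ → M_n(ℂ) are conjugate: there exists an invertible matrix u ∈ M_n(ℂ) such that g(q) = u · f(q) · u⁻¹ for all q ∈ ℍ. -/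
open Module Complex

lemma pairEquiv (n : ℕ) (I J : Module.End ℂ (Fin n → ℂ))
    (hI : I * I = -1) (hJ : J * J = -1) (hIJ : I * J = -(J * I)) :
    ∃ (V : Submodule ℂ (Fin n → ℂ)) (e : (V × V) ≃ₗ[ℂ] (Fin n → ℂ)),
      2 * Module.finrank ℂ V = n ∧
      (∀ x y : V, I (e (x, y)) = e (Complex.I • x, (-Complex.I) • y)) ∧
      (∀ x y : V, J (e (x, y)) = e (-y, x)) := by
  have hI' : ∀ m, I (I m) = -m := fun m => by
    have := LinearMap.ext_iff.mp hI m
    simpa [Module.End.mul_apply] using this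
  have hJ' : ∀ m, J (J m) = -m := fun m => by
    have := LinearMap.ext_iff.mp hJ m
    simpa [Module.End.mul_apply] using this
  have hIJ' : ∀ m, I (J m) = -J (I m) := fun m => by
    have := LinearMap.ext_iff.mp hIJ m
    simpa [Module.End.mul_apply] using this
  set V : Submodule ℂ (Fin n → ℂ) := Module.End.eigenspace I Complex.I with hV
  have memV : ∀ m, m ∈ V ↔ I m = Complex.I • m := fun m => Module.End.mem_eigenspace_iff
  set L : (V × V) →ₗ[ℂ] (Fin n → ℂ) :=
    V.subtype ∘ₗ LinearMap.fst ℂ V V + (J ∘ₗ V.subtype) ∘ₗ LinearMap.snd ℂ V V with hL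
  have hLapp : ∀ x y : V, L (x, y) = (x : Fin n → ℂ) + J y := fun x y => rfl
  have lemA : ∀ x y : V, I ((x : Fin n → ℂ) + J y)
      = Complex.I • (x : Fin n → ℂ) + (-Complex.I) • J (y : Fin n → ℂ) := by
    intro x y
    have hx : I (x : Fin n → ℂ) = Complex.I • (x : Fin n → ℂ) := (memV _).mp x.2
    have hy : I (y : Fin n → ℂ) = Complex.I • (y : Fin n → ℂ) := (memV _).mp y.2
    rw [map_add, hx, hIJ', hy, map_smul]
    module
  have lemB : ∀ x y : V, J ((x : Fin n → ℂ) + J y) = -(y : Fin n → ℂ) + J x := by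
    intro x y
    rw [map_add, hJ']
    abel
  have hPmem : ∀ m, (2:ℂ)⁻¹ • (m - Complex.I • I m) ∈ V := by
    intro m
    rw [memV]
    simp only [map_smul, map_sub, hI' m, smul_sub, smul_smul]
    match_scalars <;> (try ring) <;> norm_num [Complex.I_sq, Complex.I_mul_I]
  have hQmem : ∀ m, -J ((2:ℂ)⁻¹ • (m + Complex.I • I m)) ∈ V := by
    intro m
    rw [memV]
    simp only [map_smul, map_add, map_neg, hI' m, hIJ', hJ', smul_add, smul_smul, smul_neg,
      neg_neg, smul_sub]
    match_scalars <;> (try ring) <;> norm_num [Complex.I_sq, Complex.I_mul_I]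
  set inv : (Fin n → ℂ) → V × V := fun m =>
    (⟨(2:ℂ)⁻¹ • (m - Complex.I • I m), hPmem m⟩, ⟨-J ((2:ℂ)⁻¹ • (m + Complex.I • I m)), hQmem m⟩)
    with hinv
  have hright : Function.RightInverse inv L := by
    intro m
    rw [hinv]
    simp only [hLapp]
    simp only [map_smul, map_add, map_neg, hJ', smul_add, smul_sub, smul_smul, smul_neg, neg_neg]
    match_scalars <;> (try ring) <;> norm_num [Complex.I_sq, Complex.I_mul_I]
  have hleft : Function.LeftInverse inv L := by
    rintro ⟨x, y⟩
    rw [hinv]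
    have h1 := lemA x y
    ext1
    · apply Subtype.ext
      simp only [hLapp]
      rw [h1]
      push_cast
      match_scalars <;> (try ring) <;> norm_num [Complex.I_sq, Complex.I_mul_I]
    · apply Subtype.ext
      simp only [hLapp]
      rw [h1]
      simp only [map_add, map_neg, map_smul, hJ', smul_add, smul_smul, smul_neg, neg_neg]
      push_cast
      match_scalars <;> (try ring) <;> norm_num [Complex.I_sq, Complex.I_mul_I]
  set e : (V × V) ≃ₗ[ℂ] (Fin n → ℂ) := LinearEquiv.ofBijective L ⟨hleft.injective, hright.surjective⟩
  have happ : ∀ x y : V, e (x, y) = (x : Fin n → ℂ) + J y := fun x y => rfl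
  refine ⟨V, e, ?_, ?_, ?_⟩
  · have h1 : Module.finrank ℂ (V × V) = Module.finrank ℂ (Fin n → ℂ) := e.finrank_eq
    rw [Module.finrank_prod, Module.finrank_pi, Fintype.card_fin] at h1
    omega
  · intro x y
    rw [happ, happ, lemA]
    simp [map_smul]
  · intro x y
    rw [happ, happ, lemB]
    simp

lemma intertwine (n : ℕ) (I J I' J' : Module.End ℂ (Fin n → ℂ))
    (hI : I * I = -1) (hJ : J * J = -1) (hIJ : I * J = -(J * I))
    (hI' : I' * I' = -1) (hJ' : J' * J' = -1) (hIJ' : I' * J' = -(J' * I')) :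
    ∃ E : (Fin n → ℂ) ≃ₗ[ℂ] (Fin n → ℂ),
      (∀ m, E (I m) = I' (E m)) ∧ (∀ m, E (J m) = J' (E m)) := by
  obtain ⟨V, e, hd, hIe, hJe⟩ := pairEquiv n I J hI hJ hIJ
  obtain ⟨V', e', hd', hIe', hJe'⟩ := pairEquiv n I' J' hI' hJ' hIJ'
  have hrank : Module.finrank ℂ V = Module.finrank ℂ V' := by omega
  obtain ⟨φ⟩ := FiniteDimensional.nonempty_linearEquiv_of_finrank_eq hrank
  refine ⟨e.symm ≪≫ₗ (φ.prodCongr φ) ≪≫ₗ e', ?_, ?_⟩ <;> intro m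
  · obtain ⟨⟨x, y⟩, rfl⟩ := e.surjective m
    rw [hIe]
    simp only [LinearEquiv.trans_apply, LinearEquiv.symm_apply_apply, LinearEquiv.prodCongr_apply]
    rw [hIe']
    simp [LinearEquiv.prodCongr_apply, map_smul]
  · obtain ⟨⟨x, y⟩, rfl⟩ := e.surjective m
    rw [hJe]
    simp only [LinearEquiv.trans_apply, LinearEquiv.symm_apply_apply, LinearEquiv.prodCongr_apply]
    rw [hJe']
    simp [LinearEquiv.prodCongr_apply, map_neg]

/-- For every natural number `n`, any two unital `ℝ`-algebra homomorphisms
`f, g : ℍ → Mₙ(ℂ)` are conjugate by an invertible matrix. -/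
theorem stmt_7 (n : ℕ) (f g : Quaternion ℝ →ₐ[ℝ] Matrix (Fin n) (Fin n) ℂ) :
    ∃ u : (Matrix (Fin n) (Fin n) ℂ)ˣ, ∀ q : Quaternion ℝ,
      g q = (u : Matrix (Fin n) (Fin n) ℂ) * f q * ((u⁻¹ : (Matrix (Fin n) (Fin n) ℂ)ˣ) : Matrix (Fin n) (Fin n) ℂ) := by
  set iq : Quaternion ℝ := ⟨0,1,0,0⟩ with hiq
  set jq : Quaternion ℝ := ⟨0,0,1,0⟩ with hjq
  set kq : Quaternion ℝ := ⟨0,0,0,1⟩ with hkq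
  have hii : iq * iq = -1 := by ext <;> simp only [Quaternion.re_mul, Quaternion.imI_mul, Quaternion.imJ_mul, Quaternion.imK_mul, Quaternion.re_neg, Quaternion.imI_neg, Quaternion.imJ_neg, Quaternion.imK_neg, Quaternion.re_one, Quaternion.imI_one, Quaternion.imJ_one, Quaternion.imK_one] <;> simp [hiq]
  have hjj : jq * jq = -1 := by ext <;> simp only [Quaternion.re_mul, Quaternion.imI_mul, Quaternion.imJ_mul, Quaternion.imK_mul, Quaternion.re_neg, Quaternion.imI_neg, Quaternion.imJ_neg, Quaternion.imK_neg, Quaternion.re_one, Quaternion.imI_one, Quaternion.imJ_one, Quaternion.imK_one] <;> simp [hjq]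
  have hij : iq * jq = -(jq * iq) := by ext <;> simp only [Quaternion.re_mul, Quaternion.imI_mul, Quaternion.imJ_mul, Quaternion.imK_mul, Quaternion.re_neg, Quaternion.imI_neg, Quaternion.imJ_neg, Quaternion.imK_neg, Quaternion.re_one, Quaternion.imI_one, Quaternion.imJ_one, Quaternion.imK_one] <;> simp [hiq, hjq]
  have hijk : iq * jq = kq := by ext <;> simp only [Quaternion.re_mul, Quaternion.imI_mul, Quaternion.imJ_mul, Quaternion.imK_mul, Quaternion.re_neg, Quaternion.imI_neg, Quaternion.imJ_neg, Quaternion.imK_neg, Quaternion.re_one, Quaternion.imI_one, Quaternion.imJ_one, Quaternion.imK_one] <;> simp [hiq, hjq, hkq]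
  -- transfer the relations to linear endomorphisms
  have key : ∀ h : Quaternion ℝ →ₐ[ℝ] Matrix (Fin n) (Fin n) ℂ,
      ∀ a b : Quaternion ℝ, a * b = -1 → Matrix.toLin' (h a) * Matrix.toLin' (h b)
        = (-1 : Module.End ℂ (Fin n → ℂ)) := by
    intro h a b hab
    have : h a * h b = -1 := by rw [← map_mul, hab, map_neg, map_one]
    rw [Module.End.mul_eq_comp, ← Matrix.toLin'_mul, this]
    simp [Module.End.one_eq_id]
  have keyanti : ∀ h : Quaternion ℝ →ₐ[ℝ] Matrix (Fin n) (Fin n) ℂ,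
      Matrix.toLin' (h iq) * Matrix.toLin' (h jq)
        = -(Matrix.toLin' (h jq) * Matrix.toLin' (h iq)) := by
    intro h
    have : h iq * h jq = -(h jq * h iq) := by rw [← map_mul, ← map_mul, ← map_neg, hij]
    rw [Module.End.mul_eq_comp, Module.End.mul_eq_comp, ← Matrix.toLin'_mul, ← Matrix.toLin'_mul,
      this]
    simp
  obtain ⟨E, hEi, hEj⟩ := intertwine n
    (Matrix.toLin' (f iq)) (Matrix.toLin' (f jq)) (Matrix.toLin' (g iq)) (Matrix.toLin' (g jq))
    (key f _ _ hii) (key f _ _ hjj) (keyanti f) (key g _ _ hii) (key g _ _ hjj) (keyanti g)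
  set U := LinearMap.toMatrix' E.toLinearMap with hU
  set Ui := LinearMap.toMatrix' E.symm.toLinearMap with hUi
  have hcomp1 : E.toLinearMap ∘ₗ E.symm.toLinearMap = LinearMap.id := by ext m; simp
  have hcomp2 : E.symm.toLinearMap ∘ₗ E.toLinearMap = LinearMap.id := by ext m; simp
  have huv : U * Ui = 1 := by
    rw [hU, hUi, ← LinearMap.toMatrix'_comp, hcomp1, LinearMap.toMatrix'_id]
  have hvu : Ui * U = 1 := by
    rw [hU, hUi, ← LinearMap.toMatrix'_comp, hcomp2, LinearMap.toMatrix'_id]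
  have hmul : ∀ A B : Matrix (Fin n) (Fin n) ℂ, (U*A*Ui) * (U*B*Ui) = U*(A*B)*Ui := by
    intro A B
    calc (U*A*Ui) * (U*B*Ui) = U*(A*((Ui*U)*(B*Ui))) := by simp only [mul_assoc]
      _ = U*(A*B)*Ui := by rw [hvu, one_mul]; simp only [mul_assoc]
  -- conjugation identities on generators
  have hgen : ∀ a : Quaternion ℝ,
      (∀ m, E (Matrix.toLin' (f a) m) = Matrix.toLin' (g a) (E m)) → g a = U * f a * Ui := by
    intro a ha
    have hmap : E.toLinearMap ∘ₗ Matrix.toLin' (f a) ∘ₗ E.symm.toLinearMap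
        = Matrix.toLin' (g a) := by
      ext m
      simp only [LinearMap.comp_apply, LinearEquiv.coe_coe]
      rw [ha, LinearEquiv.apply_symm_apply]
    have := congrArg LinearMap.toMatrix' hmap
    rw [LinearMap.toMatrix'_comp, LinearMap.toMatrix'_comp, LinearMap.toMatrix'_toLin',
      LinearMap.toMatrix'_toLin'] at this
    rw [← this, hU, hUi, mul_assoc]
  have hci : g iq = U * f iq * Ui := hgen iq hEi
  have hcj : g jq = U * f jq * Ui := hgen jq hEj
  have hck : g kq = U * f kq * Ui := by
    rw [← hijk, map_mul, map_mul, hci, hcj, hmul]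
  have hc1 : g 1 = U * f 1 * Ui := by rw [map_one, map_one, mul_one, huv]
  refine ⟨⟨U, Ui, huv, hvu⟩, ?_⟩
  intro q
  have hdecomp : q = q.re • 1 + q.imI • iq + q.imJ • jq + q.imK • kq := by
    ext <;> simp only [Quaternion.re_smul, Quaternion.imI_smul, Quaternion.imJ_smul, Quaternion.imK_smul, Quaternion.re_add, Quaternion.imI_add, Quaternion.imJ_add, Quaternion.imK_add, Quaternion.re_one, Quaternion.imI_one, Quaternion.imJ_one, Quaternion.imK_one] <;> simp [hiq, hjq, hkq]
  have hinv : ((⟨U, Ui, huv, hvu⟩ : (Matrix (Fin n) (Fin n) ℂ)ˣ)⁻¹ :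
      (Matrix (Fin n) (Fin n) ℂ)ˣ) = (⟨Ui, U, hvu, huv⟩ : (Matrix (Fin n) (Fin n) ℂ)ˣ) := rfl
  rw [hinv]
  show g q = U * f q * Ui
  conv_lhs => rw [hdecomp]
  conv_rhs => rw [hdecomp]
  simp only [map_add, map_smul, hci, hcj, hck, hc1, mul_add, add_mul, mul_smul_comm,
    smul_mul_assoc]
end

section
/- For every natural number n ≥ 1, there exists an injective unital ℝ-algebra homomorphism ℍ → M_n(ℂ) if and only if n is even. -/
open Matrix Kronecker

noncomputable def rep2 : Quaternion ℝ →ₐ[ℝ] Matrix (Fin 2) (Fin 2) ℂ where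
  toFun q := !![⟨q.re, q.imI⟩, ⟨q.imJ, q.imK⟩; ⟨-q.imJ, q.imK⟩, ⟨q.re, -q.imI⟩]
  map_one' := by
    ext i j
    fin_cases i <;> fin_cases j <;>
      simp [Matrix.one_apply, Complex.ext_iff, Quaternion.re_one, Quaternion.imI_one, Quaternion.imJ_one, Quaternion.imK_one]
  map_mul' a b := by
    ext i j
    fin_cases i <;> fin_cases j <;>
      simp [Matrix.mul_apply, Fin.sum_univ_two, Complex.ext_iff, Quaternion.re_mul,
        Quaternion.imI_mul, Quaternion.imJ_mul, Quaternion.imK_mul] <;>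
      constructor <;> first | trivial | ring
  map_zero' := by
    ext i j
    fin_cases i <;> fin_cases j <;> simp [Complex.ext_iff, Quaternion.re_zero, Quaternion.imI_zero,
      Quaternion.imJ_zero, Quaternion.imK_zero]
  map_add' a b := by
    ext i j
    fin_cases i <;> fin_cases j <;> simp [Complex.ext_iff] <;> ring
  commutes' r := by
    ext i j
    fin_cases i <;> fin_cases j <;>
      simp [Matrix.algebraMap_matrix_apply, Complex.ext_iff, Algebra.algebraMap_eq_smul_one,
        Quaternion.re_one, Quaternion.imI_one, Quaternion.imJ_one, Quaternion.imK_one]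

noncomputable def krHom (m : ℕ) :
    Matrix (Fin 2) (Fin 2) ℂ →ₐ[ℝ] Matrix (Fin 2 × Fin m) (Fin 2 × Fin m) ℂ where
  toFun A := A ⊗ₖ (1 : Matrix (Fin m) (Fin m) ℂ)
  map_one' := Matrix.one_kronecker_one
  map_mul' A B := by rw [← Matrix.mul_kronecker_mul, one_mul]
  map_zero' := Matrix.zero_kronecker _
  map_add' A B := Matrix.add_kronecker _ _ _
  commutes' r := by
    show (algebraMap ℝ _ r) ⊗ₖ (1 : Matrix (Fin m) (Fin m) ℂ) = _
    rw [Algebra.algebraMap_eq_smul_one, Algebra.algebraMap_eq_smul_one,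
      Matrix.smul_kronecker, Matrix.one_kronecker_one]

/-- For every natural number `n ≥ 1`, there exists an injective unital `ℝ`-algebra
homomorphism `ℍ → Mₙ(ℂ)` if and only if `n` is even. -/
theorem stmt_8 (n : ℕ) (hn : 1 ≤ n) :
    (∃ f : Quaternion ℝ →ₐ[ℝ] Matrix (Fin n) (Fin n) ℂ, Function.Injective f) ↔ Even n := by
  constructor
  · rintro ⟨f, -⟩
    set a : Quaternion ℝ := ⟨0, 1, 0, 0⟩ with ha
    set b : Quaternion ℝ := ⟨0, 0, 1, 0⟩ with hb
    have hba : b * a = -(a * b) := by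
      ext <;> simp [Quaternion.re_mul, Quaternion.imI_mul, Quaternion.imJ_mul,
        Quaternion.imK_mul, Quaternion.re_one, Quaternion.imI_one, Quaternion.imJ_one,
        Quaternion.imK_one] <;> simp [ha, hb]
    have hsq : (a * b) * (a * b) = -1 := by
      ext <;> simp [Quaternion.re_mul, Quaternion.imI_mul, Quaternion.imJ_mul,
        Quaternion.imK_mul, Quaternion.re_one, Quaternion.imI_one, Quaternion.imJ_one,
        Quaternion.imK_one] <;> simp [ha, hb]
    have key0 : -(f (a * b) * f (a * b)) = 1 := by
      rw [← _root_.map_mul, hsq, map_neg, neg_neg, _root_.map_one]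
    have key : f (a * b) * -(f (a * b)) = 1 := by rw [mul_neg]; exact key0
    have key2 : -(f (a * b)) * f (a * b) = 1 := by rw [neg_mul]; exact key0
    have hu : IsUnit (f (a * b)) := ⟨⟨_, _, key, key2⟩, rfl⟩
    have hdet : (f (a * b)).det ≠ 0 := ((Matrix.isUnit_iff_isUnit_det _).mp hu).ne_zero
    have h1 : (f a * f b).det = (f b * f a).det := Matrix.det_mul_comm _ _
    have h2 : f b * f a = -(f a * f b) := by
      rw [← _root_.map_mul, hba, map_neg, _root_.map_mul]
    rw [h2, Matrix.det_neg, Fintype.card_fin, ← _root_.map_mul] at h1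
    rcases Nat.even_or_odd n with he | ho
    · exact he
    · rw [ho.neg_one_pow, neg_one_mul] at h1
      exact absurd (add_self_eq_zero.mp (eq_neg_iff_add_eq_zero.mp h1)) hdet
  · rintro ⟨m, rfl⟩
    have e : (Fin 2 × Fin m) ≃ Fin (m + m) := finProdFinEquiv.trans (finCongr (by omega))
    refine ⟨((Matrix.reindexAlgEquiv ℝ ℂ e).toAlgHom.comp ((krHom m).comp rep2)), ?_⟩
    haveI : Nonempty (Fin (m + m)) := ⟨⟨0, hn⟩⟩
    exact RingHom.injective _
end
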